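/- Let G = ∏_p G_p be a pronilpotent profinite group (product of its pro-p Sylow subgroups). Then the abstract profinite completion of G is isomorphic to the product of the abstract profinite completions of the G_p: Ĝ ≅ ∏_p Ĝ_p. -/

import Mathlib

section Helpers

variable {B : Type*} [Group B] [TopologicalSpace B] [IsTopologicalGroup B]

/-- A group homomorphism into a discrete group whose "kernel" contains an open
neighbourhood of `1` is continuous. -/
lemma aux_cont_of_ker {H : Type*} [Group H] [TopologicalSpace H] [DiscreteTopology H]
    (g : B →* H) {U : Set B} (hU : IsOpen U) (h1 : (1 : B) ∈ U)
    (hker : ∀ u ∈ U, g u = 1) : Continuous g := by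
  apply continuous_of_continuousAt_one g
  rw [ContinuousAt, map_one, nhds_discrete H, Filter.tendsto_pure]
  exact Filter.mem_of_superset (hU.mem_nhds h1) hker

variable [CompactSpace B] [TotallyDisconnectedSpace B] [T2Space B]

instance aux_nonempty_ons : Nonempty (OpenNormalSubgroup B) :=
  ⟨⟨⊤, ⟨fun _ _ _ => Subgroup.mem_top _⟩⟩⟩

/-- In a profinite group, every open neighbourhood of `1` contains an open normal
subgroup. -/
lemma aux_onb {U : Set B} (hU : IsOpen U) (h1 : (1 : B) ∈ U) :
    ∃ N : OpenNormalSubgroup B, (N : Set B) ⊆ U := by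
  obtain ⟨V, hV, h1V, hVU⟩ := compact_exists_isClopen_in_isOpen hU h1
  obtain ⟨N, hN⟩ := IsTopologicalGroup.exist_openNormalSubgroup_sub_clopen_nhds_of_one hV h1V
  exact ⟨N, hN.trans hVU⟩

/-- In a profinite group, the open normal subgroups separate points from `1`. -/
lemma aux_sep {x : B} (h : ∀ N : OpenNormalSubgroup B, x ∈ N) : x = 1 := by
  by_contra hx
  obtain ⟨N, hN⟩ := aux_onb (isOpen_compl_singleton (x := x)) (by simp [Ne.symm hx])
  exact hN (h N) rfl

lemma aux_eq_of_quot {b c : B}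
    (h : ∀ N : OpenNormalSubgroup B, QuotientGroup.mk' N.toSubgroup b
      = QuotientGroup.mk' N.toSubgroup c) : b = c := by
  have hmem : ∀ N : OpenNormalSubgroup B, b⁻¹ * c ∈ N := by
    intro N
    haveI := N.isNormal'
    exact (QuotientGroup.eq (s := N.toSubgroup)).mp (h N)
  have := aux_sep hmem
  rwa [inv_mul_eq_one] at this

lemma aux_mk'_continuous (N : OpenNormalSubgroup B) :
    haveI := N.isNormal'
    Continuous (QuotientGroup.mk' N.toSubgroup) := by
  haveI := N.isNormal'
  haveI : DiscreteTopology (B ⧸ N.toSubgroup) := QuotientGroup.discreteTopology N.isOpen'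
  exact aux_cont_of_ker (QuotientGroup.mk' N.toSubgroup) N.isOpen'
    (show (1 : B) ∈ (N.toSubgroup : Set B) from one_mem _)
    (fun u hu => (QuotientGroup.eq_one_iff u).mpr hu)

/-- `q`-divisibility in a pro-`p` group, for `q` prime to `p`. -/
lemma aux_div {p m : ℕ} (hp0 : p ≠ 0)
    (hpro : ∀ (U : Subgroup B) [U.Normal], IsOpen (U : Set B) → IsPGroup p (B ⧸ U))
    (hm : Nat.Coprime m p) (x : B) : ∃ y : B, y ^ m = x := by
  have hT : ∀ N : OpenNormalSubgroup B, ∃ y : B, (y ^ m)⁻¹ * x ∈ N := by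
    intro N
    haveI := N.isNormal'
    have hp : IsPGroup p (B ⧸ N.toSubgroup) := hpro N.toSubgroup N.isOpen'
    set t := orderOf ((x : B ⧸ N.toSubgroup)) with ht
    obtain ⟨k, hk⟩ := hp (x : B ⧸ N.toSubgroup)
    have htdvd : t ∣ p ^ k := orderOf_dvd_of_pow_eq_one hk
    have ht0 : 0 < t := Nat.pos_of_dvd_of_pos htdvd (Nat.pow_pos (n := k) (Nat.pos_of_ne_zero hp0))
    have hco : Nat.Coprime m t := (hm.pow_right k).coprime_dvd_right htdvd
    have hφ : 0 < Nat.totient t := Nat.totient_pos.mpr ht0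
    set a := m ^ (Nat.totient t - 1) with ha
    have hma : m * a = m ^ Nat.totient t := by
      rw [ha, ← pow_succ', Nat.sub_add_cancel hφ]
    have hmod : (a * m) % t = 1 % t := by
      rw [mul_comm, hma]; exact Nat.ModEq.pow_totient hco
    have key : ((x : B ⧸ N.toSubgroup)) ^ (a * m) = (x : B ⧸ N.toSubgroup) := by
      rw [← pow_mod_orderOf, ← ht, hmod, ht, pow_mod_orderOf, pow_one]
    refine ⟨x ^ a, ?_⟩
    show ((x ^ a) ^ m)⁻¹ * x ∈ N.toSubgroup
    rw [← QuotientGroup.eq_one_iff, QuotientGroup.mk_mul, QuotientGroup.mk_inv, ← pow_mul,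
      QuotientGroup.mk_pow, key, inv_mul_cancel]
  have hne := IsCompact.nonempty_iInter_of_directed_nonempty_isCompact_isClosed
      (fun N : OpenNormalSubgroup B => {y : B | (y ^ m)⁻¹ * x ∈ N}) ?_ ?_ ?_ ?_
  · obtain ⟨y, hy⟩ := hne
    simp only [Set.mem_iInter, Set.mem_setOf_eq] at hy
    refine ⟨y, ?_⟩
    have := aux_sep (x := (y ^ m)⁻¹ * x) hy
    rwa [inv_mul_eq_one] at this
  · intro N₁ N₂
    refine ⟨N₁ ⊓ N₂, fun y hy => ?_, fun y hy => ?_⟩ <;>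
      simp only [Set.mem_setOf_eq] at hy ⊢
    · exact inf_le_left (a := N₁) (b := N₂) hy
    · exact inf_le_right (a := N₁) (b := N₂) hy
  · exact hT
  · intro N
    exact (IsClosed.preimage ((continuous_pow m).inv.mul continuous_const)
      (N.toOpenSubgroup.isClosed)).isCompact
  · intro N
    exact IsClosed.preimage ((continuous_pow m).inv.mul continuous_const)
      (N.toOpenSubgroup.isClosed)

end Helpers

section Lift

/-- The universal property with respect to finite discrete groups lets us lift
homomorphisms along `k` to continuous homomorphisms into any profinite group. -/
lemma aux_lift {S A : Type} [Group S] [Group A] [TopologicalSpace A] [IsTopologicalGroup A]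
    [CompactSpace A] [TotallyDisconnectedSpace A] [T2Space A]
    {B : Type} [Group B] [TopologicalSpace B] [IsTopologicalGroup B]
    [CompactSpace B] [TotallyDisconnectedSpace B] [T2Space B]
    (k : S →* A)
    (huniv : ∀ (H : Type) [Group H] [Finite H] [TopologicalSpace H] [DiscreteTopology H]
      (f : S →* H), ∃! fhat : A →* H, Continuous fhat ∧ fhat.comp k = f)
    (m : S →* B) : ∃ φ : A →* B, Continuous φ ∧ φ.comp k = m := by
  haveI : ∀ N : OpenNormalSubgroup B, N.toSubgroup.Normal := fun N => N.isNormal'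
  haveI : ∀ N : OpenNormalSubgroup B, DiscreteTopology (B ⧸ N.toSubgroup) :=
    fun N => QuotientGroup.discreteTopology N.isOpen'
  haveI : ∀ N : OpenNormalSubgroup B, Finite (B ⧸ N.toSubgroup) :=
    fun N => Subgroup.quotient_finite_of_isOpen _ N.isOpen'
  have hgs : ∀ N : OpenNormalSubgroup B, ∃! fhat : A →* B ⧸ N.toSubgroup,
      Continuous fhat ∧ fhat.comp k = (QuotientGroup.mk' N.toSubgroup).comp m :=
    fun N => huniv (B ⧸ N.toSubgroup) ((QuotientGroup.mk' N.toSubgroup).comp m)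
  set gN : ∀ N : OpenNormalSubgroup B, A →* B ⧸ N.toSubgroup :=
    fun N => (hgs N).exists.choose with hgNdef
  have hgN : ∀ N, Continuous (gN N) ∧ (gN N).comp k = (QuotientGroup.mk' N.toSubgroup).comp m :=
    fun N => (hgs N).exists.choose_spec
  have hcompat : ∀ (N M : OpenNormalSubgroup B) (h : N.toSubgroup ≤ M.toSubgroup) (x : A),
      QuotientGroup.map N.toSubgroup M.toSubgroup (MonoidHom.id B)
        (by simpa using h) (gN N x) = gN M x := by
    intro N M h x
    set π := QuotientGroup.map N.toSubgroup M.toSubgroup (MonoidHom.id B) (by simpa using h)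
    have hπ : ∀ b : B, π (QuotientGroup.mk' N.toSubgroup b) = QuotientGroup.mk' M.toSubgroup b :=
      fun b => rfl
    have : π.comp (gN N) = gN M := by
      refine ((hgs M).unique ⟨?_, ?_⟩ (hgN M))
      · rw [MonoidHom.coe_comp]
        exact Continuous.comp continuous_of_discreteTopology (hgN N).1
      · ext s
        simp only [MonoidHom.comp_apply]
        rw [show gN N (k s) = (QuotientGroup.mk' N.toSubgroup) (m s) from
          DFunLike.congr_fun (hgN N).2 s, hπ]
    exact DFunLike.congr_fun this x
  have hbx : ∀ x : A, ∃ b : B, ∀ N : OpenNormalSubgroup B,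
      QuotientGroup.mk' N.toSubgroup b = gN N x := by
    intro x
    have hne := IsCompact.nonempty_iInter_of_directed_nonempty_isCompact_isClosed
        (fun N : OpenNormalSubgroup B =>
          (QuotientGroup.mk' N.toSubgroup) ⁻¹' {gN N x}) ?_ ?_ ?_ ?_
    · obtain ⟨b, hb⟩ := hne
      simp only [Set.mem_iInter, Set.mem_preimage, Set.mem_singleton_iff] at hb
      exact ⟨b, hb⟩
    · intro N₁ N₂
      refine ⟨N₁ ⊓ N₂, fun b hb => ?_, fun b hb => ?_⟩ <;>
        simp only [Set.mem_preimage, Set.mem_singleton_iff] at hb ⊢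
      · rw [← hcompat (N₁ ⊓ N₂) N₁ inf_le_left x, ← hb]; rfl
      · rw [← hcompat (N₁ ⊓ N₂) N₂ inf_le_right x, ← hb]; rfl
    · intro N
      obtain ⟨b, hb⟩ := QuotientGroup.mk'_surjective N.toSubgroup (gN N x)
      exact ⟨b, hb⟩
    · intro N
      exact (IsClosed.preimage (aux_mk'_continuous N) isClosed_singleton).isCompact
    · intro N
      exact IsClosed.preimage (aux_mk'_continuous N) isClosed_singleton
  set φ0 : A → B := fun x => (hbx x).choose with hφ0def
  have hφ0 : ∀ (x : A) (N : OpenNormalSubgroup B),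
      QuotientGroup.mk' N.toSubgroup (φ0 x) = gN N x := fun x => (hbx x).choose_spec
  set φ : A →* B :=
    { toFun := φ0
      map_one' := aux_eq_of_quot (fun N => by rw [hφ0, map_one, map_one])
      map_mul' := fun x y => aux_eq_of_quot (fun N => by
        rw [hφ0, map_mul, map_mul, hφ0, hφ0]) } with hφdef
  have hφ : ∀ (x : A) (N : OpenNormalSubgroup B),
      QuotientGroup.mk' N.toSubgroup (φ x) = gN N x := hφ0
  refine ⟨φ, ?_, ?_⟩
  · apply continuous_of_continuousAt_one φ
    rw [ContinuousAt, map_one]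
    intro s hs
    obtain ⟨U, hUs, hU, h1U⟩ := mem_nhds_iff.mp hs
    obtain ⟨N, hNU⟩ := aux_onb hU h1U
    rw [Filter.mem_map]
    refine Filter.mem_of_superset (IsOpen.mem_nhds (((hgN N).1).isOpen_preimage {1}
      (isOpen_discrete _)) (by simp [map_one])) ?_
    intro a ha
    simp only [Set.mem_preimage, Set.mem_singleton_iff] at ha
    have : QuotientGroup.mk' N.toSubgroup (φ a) = 1 := by rw [hφ a N, ha]
    exact hUs (hNU ((QuotientGroup.eq_one_iff _).mp this))
  · ext s
    refine aux_eq_of_quot (fun N => ?_)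
    rw [MonoidHom.comp_apply, hφ (k s) N]
    exact DFunLike.congr_fun (hgN N).2 s

end Lift

section ProdUniv

variable (G : Nat.Primes → Type) [∀ p, Group (G p)]
    [∀ p, TopologicalSpace (G p)] [∀ p, IsTopologicalGroup (G p)]
    [∀ p, CompactSpace (G p)] [∀ p, TotallyDisconnectedSpace (G p)] [∀ p, T2Space (G p)]
    (Ghatp : Nat.Primes → Type) [∀ p, Group (Ghatp p)]
    [∀ p, TopologicalSpace (Ghatp p)] [∀ p, IsTopologicalGroup (Ghatp p)]
    [∀ p, CompactSpace (Ghatp p)] [∀ p, TotallyDisconnectedSpace (Ghatp p)]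
    [∀ p, T2Space (Ghatp p)]
    (ip : ∀ p, G p →* Ghatp p)

/-- The product of the completion maps. -/
def auxJ : (∀ p, G p) →* (∀ p, Ghatp p) where
  toFun x p := ip p (x p)
  map_one' := by funext p; simp
  map_mul' a b := by funext p; simp

lemma auxJ_dense (hpdense : ∀ p, DenseRange (ip p)) :
    DenseRange (auxJ G Ghatp ip) := by
  have hr : Set.range (auxJ G Ghatp ip) = Set.pi Set.univ (fun p => Set.range (ip p)) := by
    ext y
    constructor
    · rintro ⟨x, rfl⟩ p -
      exact ⟨x p, rfl⟩
    · intro hy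
      choose x hx using fun p => hy p (Set.mem_univ p)
      exact ⟨x, funext hx⟩
  rw [DenseRange, hr, dense_iff_closure_eq, closure_pi_set]
  simp [fun p => (hpdense p).closure_range]

lemma aux_univ_prod
    (hpro : ∀ p : Nat.Primes, ∀ (U : Subgroup (G p)) [U.Normal],
      IsOpen (U : Set (G p)) → IsPGroup (p : ℕ) ((G p) ⧸ U))
    (hpdense : ∀ p, DenseRange (ip p))
    (hpuniv : ∀ p, ∀ (H : Type) [Group H] [Finite H] [TopologicalSpace H]
      [DiscreteTopology H] (f : G p →* H),
      ∃! fhat : Ghatp p →* H, Continuous fhat ∧ fhat.comp (ip p) = f)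
    (H : Type) [Group H] [Finite H] [TopologicalSpace H] [DiscreteTopology H]
    (f : (∀ p, G p) →* H) :
    ∃! g : (∀ p, Ghatp p) →* H, Continuous g ∧ g.comp (auxJ G Ghatp ip) = f := by
  classical
  set n := Nat.card H with hn
  have hn0 : n ≠ 0 := Nat.card_pos.ne'
  -- the finite set of primes dividing the cardinality of H
  have hSfin : {q : Nat.Primes | (q : ℕ) ∣ n}.Finite := by
    have h1 : {m : ℕ | m ∣ n}.Finite :=
      Set.Finite.subset (Set.finite_Iic n)
        (fun m hm => Nat.le_of_dvd (Nat.pos_of_ne_zero hn0) hm)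
    have h2 : {q : Nat.Primes | (q : ℕ) ∣ n}
        = (fun q : Nat.Primes => (q : ℕ)) ⁻¹' {m : ℕ | m ∣ n} := rfl
    rw [h2]
    exact Set.Finite.preimage (Set.injOn_of_injective Nat.Primes.coe_nat_injective) h1
  set S : Finset Nat.Primes := hSfin.toFinset with hS
  have hSmem : ∀ q : Nat.Primes, q ∈ S ↔ (q : ℕ) ∣ n := by
    intro q; rw [hS, Set.Finite.mem_toFinset]; rfl
  -- key divisibility consequence
  have hE2 : ∀ y : ∀ p, G p, (∀ q : Nat.Primes, (q : ℕ) ∣ n → y q = 1) → f y = 1 := by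
    intro y hy
    by_contra hfy
    have hord : orderOf (f y) ∣ n := orderOf_dvd_natCard _
    have hne1 : orderOf (f y) ≠ 1 := by
      rwa [ne_eq, orderOf_eq_one_iff]
    obtain ⟨q, hqprime, hqdvd⟩ := Nat.exists_prime_and_dvd hne1
    have hqn : q ∣ n := hqdvd.trans hord
    set Q : Nat.Primes := ⟨q, hqprime⟩ with hQ
    have hroot : ∀ p : Nat.Primes, ∃ w : G p, w ^ (q ^ n) = y p := by
      intro p
      by_cases hpq : p = Q
      · subst hpq
        exact ⟨1, by rw [one_pow, hy _ hqn]⟩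
      · refine aux_div (p := (p : ℕ)) p.2.pos.ne' (hpro p) ?_ (y p)
        exact Nat.Coprime.pow_left n ((Nat.coprime_primes hqprime p.2).mpr
          (fun h => hpq (Subtype.ext h.symm)))
    choose w hw using hroot
    have hwy : w ^ (q ^ n) = y := funext fun p => hw p
    have hfyw : f y = (f w) ^ (q ^ n) := by rw [← hwy, map_pow]
    set t := orderOf (f w) with ht
    have ht0 : t ≠ 0 := (orderOf_pos _).ne'
    have htn : t ∣ n := orderOf_dvd_natCard _
    set v := t.factorization q with hv
    set r := t / q ^ v with hr
    have hqr : ¬ (q ∣ r) := Nat.not_dvd_ordCompl hqprime ht0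
    have htr : q ^ v * r = t := Nat.ordProj_mul_ordCompl_eq_self t q
    have hvn : v ≤ n := by
      have h1 : q ^ v ≤ n := Nat.le_of_dvd (Nat.pos_of_ne_zero hn0)
        ((Nat.ordProj_dvd t q).trans htn)
      exact le_of_lt (lt_of_lt_of_le (Nat.lt_pow_self (n := v) hqprime.one_lt) h1)
    have hfyr : (f y) ^ r = 1 := by
      rw [hfyw, ← pow_mul]
      have hqnr : q ^ n * r = t * q ^ (n - v) := by
        rw [← htr, show q ^ n = q ^ v * q ^ (n - v) by
          rw [← pow_add, Nat.add_sub_cancel' hvn]]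
        ring
      rw [hqnr, pow_mul, pow_orderOf_eq_one, one_pow]
    exact hqr (hqdvd.trans (orderOf_dvd_of_pow_eq_one hfyr))
  -- extension homomorphism from the finite subproduct
  set ext : (∀ q : {q : Nat.Primes // q ∈ S}, G q) →* (∀ p, G p) :=
    { toFun := fun v p => if h : p ∈ S then v ⟨p, h⟩ else 1
      map_one' := by funext p; by_cases h : p ∈ S <;> simp [h]
      map_mul' := fun a b => by funext p; by_cases h : p ∈ S <;> simp [h] } with hext
  set fbar : (∀ q : {q : Nat.Primes // q ∈ S}, G q) →* H := f.comp ext with hfbar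
  have hfactor : ∀ x : ∀ p, G p, f x = fbar (fun q => x q) := by
    intro x
    have h1 : f (ext (fun q : {q : Nat.Primes // q ∈ S} => x q) * x⁻¹) = 1 := by
      refine hE2 _ (fun q hq => ?_)
      have hqS : q ∈ S := (hSmem q).mpr hq
      show (ext (fun q : {q : Nat.Primes // q ∈ S} => x q)) q * (x⁻¹) q = 1
      rw [hext]
      simp [hqS]
    have h2 : fbar (fun q => x q) = f (ext (fun q : {q : Nat.Primes // q ∈ S} => x q)
        * x⁻¹ * x) := by
      rw [inv_mul_cancel_right]; rfl
    rw [h2, map_mul, h1, one_mul]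
  -- the component homomorphisms and their lifts
  set fq : ∀ q : {q : Nat.Primes // q ∈ S}, G q →* H :=
    fun q => fbar.comp (MonoidHom.mulSingle (fun q' : {q : Nat.Primes // q ∈ S} => G q') q)
    with hfq
  have hcommf : Pairwise fun (q q' : {q : Nat.Primes // q ∈ S}) =>
      ∀ a b, Commute (fq q a) (fq q' b) := by
    intro q q' hne a b
    exact (Pi.mulSingle_commute hne a b).map fbar
  have hlift := fun q : {q : Nat.Primes // q ∈ S} => (hpuniv q H (fq q)).exists
  set gq : ∀ q : {q : Nat.Primes // q ∈ S}, Ghatp q →* H :=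
    fun q => (hlift q).choose with hgqdef
  have hgq : ∀ q, Continuous (gq q) ∧ (gq q).comp (ip q) = fq q :=
    fun q => (hlift q).choose_spec
  have hcommg : Pairwise fun (q q' : {q : Nat.Primes // q ∈ S}) =>
      ∀ a b, Commute (gq q a) (gq q' b) := by
    intro q q' hne
    have hclosed : IsClosed {ab : Ghatp q × Ghatp q' |
        gq q ab.1 * gq q' ab.2 = gq q' ab.2 * gq q ab.1} :=
      isClosed_eq
        (((hgq q).1.comp continuous_fst).mul ((hgq q').1.comp continuous_snd))
        (((hgq q').1.comp continuous_snd).mul ((hgq q).1.comp continuous_fst))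
    have hsub : Set.range (Prod.map (ip q) (ip q')) ⊆ {ab : Ghatp q × Ghatp q' |
        gq q ab.1 * gq q' ab.2 = gq q' ab.2 * gq q ab.1} := by
      rintro _ ⟨⟨u, v⟩, rfl⟩
      show gq q (ip q u) * gq q' (ip q' v) = gq q' (ip q' v) * gq q (ip q u)
      rw [show gq q (ip q u) = fq q u from DFunLike.congr_fun (hgq q).2 u,
        show gq q' (ip q' v) = fq q' v from DFunLike.congr_fun (hgq q').2 v]
      exact hcommf hne u v
    have huniv : {ab : Ghatp q × Ghatp q' |
        gq q ab.1 * gq q' ab.2 = gq q' ab.2 * gq q ab.1} = Set.univ := by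
      apply Set.eq_univ_of_univ_subset
      rw [← ((hpdense q).prodMap (hpdense q')).closure_range]
      exact closure_minimal hsub hclosed
    intro a b
    have : (a, b) ∈ ({ab : Ghatp q × Ghatp q' |
        gq q ab.1 * gq q' ab.2 = gq q' ab.2 * gq q ab.1}) := by rw [huniv]; trivial
    exact this
  set gbar : (∀ q : {q : Nat.Primes // q ∈ S}, Ghatp q) →* H :=
    MonoidHom.noncommPiCoprod gq hcommg with hgbar
  set RG : (∀ p, Ghatp p) →* (∀ q : {q : Nat.Primes // q ∈ S}, Ghatp q) :=
    { toFun := fun y q => y q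
      map_one' := rfl
      map_mul' := fun _ _ => rfl } with hRG
  set g : (∀ p, Ghatp p) →* H := gbar.comp RG with hg
  have hgapply : ∀ y : ∀ p, Ghatp p,
      g y = Finset.univ.noncommProd (fun q : {q : Nat.Primes // q ∈ S} => gq q (y q))
        (fun _ _ _ _ h => hcommg h _ _) := fun y => rfl
  have hgcont : Continuous g := by
    have hU : IsOpen (⋂ q : {q : Nat.Primes // q ∈ S},
        (fun y : ∀ p, Ghatp p => y (q : Nat.Primes)) ⁻¹' ((gq q) ⁻¹' {1})) :=
      isOpen_iInter_of_finite (fun q =>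
        ((hgq q).1.comp (continuous_apply _)).isOpen_preimage _ (isOpen_discrete _))
    refine aux_cont_of_ker g hU ?_ ?_
    · simp
    · intro u hu
      simp only [Set.mem_iInter, Set.mem_preimage, Set.mem_singleton_iff] at hu
      rw [hgapply]; exact (Finset.noncommProd_eq_pow_card _ _ _ 1 (fun q _ => hu q)).trans (one_pow _)
  have hgcomp : g.comp (auxJ G Ghatp ip) = f := by
    ext x
    rw [MonoidHom.comp_apply, hgapply, hfactor x]
    have h1 : fbar (fun q : {q : Nat.Primes // q ∈ S} => x q)
        = Finset.univ.noncommProd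
          (fun q : {q : Nat.Primes // q ∈ S} => fq q (x q))
          (fun _ _ _ _ h => hcommf h _ _) := by
      conv_lhs => rw [← Finset.noncommProd_mulSingle (fun q : {q : Nat.Primes // q ∈ S} => x q)]
      exact Finset.map_noncommProd _ _ _ fbar
    rw [h1]
    refine Finset.noncommProd_congr rfl (fun q _ => ?_) _
    show gq q (ip q (x q)) = fq q (x q)
    exact DFunLike.congr_fun (hgq q).2 (x q)
  refine ⟨g, ⟨hgcont, hgcomp⟩, ?_⟩
  rintro g' ⟨hc', he'⟩
  have hdj : Dense (Set.range (auxJ G Ghatp ip)) := auxJ_dense G Ghatp ip hpdense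
  have : ⇑g' = ⇑g := by
    refine Continuous.ext_on hdj hc' hgcont ?_
    rintro _ ⟨x, rfl⟩
    rw [show g' (auxJ G Ghatp ip x) = f x from DFunLike.congr_fun he' x,
      show g (auxJ G Ghatp ip x) = f x from DFunLike.congr_fun hgcomp x]
  exact MonoidHom.ext (congrFun this)

end ProdUniv


set_option maxHeartbeats 1000000 in
/-- Let `G = ∏_p G_p` be a pronilpotent profinite group (the product of
its pro-`p` Sylow subgroups).  If `i_p : G_p →* Ghat_p` are the abstract profinite
completions of the `G_p` and `i : G →* Ghat` is the abstract profinite completion of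
`G` (dense range and unique continuous lifts to finite groups), then
`Ghat ≅ ∏_p Ghat_p` as topological groups. -/
theorem stmt_12 (G : Nat.Primes → Type) [∀ p, Group (G p)]
    [∀ p, TopologicalSpace (G p)] [∀ p, IsTopologicalGroup (G p)]
    [∀ p, CompactSpace (G p)] [∀ p, TotallyDisconnectedSpace (G p)] [∀ p, T2Space (G p)]
    (hpro : ∀ p : Nat.Primes, ∀ (U : Subgroup (G p)) [U.Normal],
      IsOpen (U : Set (G p)) → IsPGroup (p : ℕ) ((G p) ⧸ U))
    (Ghatp : Nat.Primes → Type) [∀ p, Group (Ghatp p)]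
    [∀ p, TopologicalSpace (Ghatp p)] [∀ p, IsTopologicalGroup (Ghatp p)]
    [∀ p, CompactSpace (Ghatp p)] [∀ p, TotallyDisconnectedSpace (Ghatp p)]
    [∀ p, T2Space (Ghatp p)]
    (ip : ∀ p, G p →* Ghatp p) (hpdense : ∀ p, DenseRange (ip p))
    (hpuniv : ∀ p, ∀ (H : Type) [Group H] [Finite H] [TopologicalSpace H]
      [DiscreteTopology H] (f : G p →* H),
      ∃! fhat : Ghatp p →* H, Continuous fhat ∧ fhat.comp (ip p) = f)
    (Ghat : Type) [Group Ghat] [TopologicalSpace Ghat] [IsTopologicalGroup Ghat]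
    [CompactSpace Ghat] [TotallyDisconnectedSpace Ghat] [T2Space Ghat]
    (i : (∀ p, G p) →* Ghat) (hdense : DenseRange i)
    (huniv : ∀ (H : Type) [Group H] [Finite H] [TopologicalSpace H]
      [DiscreteTopology H] (f : (∀ p, G p) →* H),
      ∃! fhat : Ghat →* H, Continuous fhat ∧ fhat.comp i = f) :
    ∃ e : Ghat ≃* ∀ p, Ghatp p, Continuous e ∧ Continuous e.symm := by
  obtain ⟨φ, hφc, hφcomp⟩ := aux_lift i huniv (auxJ G Ghatp ip)
  obtain ⟨ψ, hψc, hψcomp⟩ := aux_lift (auxJ G Ghatp ip)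
    (aux_univ_prod G Ghatp ip hpro hpdense hpuniv) i
  have h1 : ∀ x : Ghat, ψ (φ x) = x := by
    have heq : ⇑ψ ∘ ⇑φ = id := by
      refine Continuous.ext_on hdense (hψc.comp hφc) continuous_id ?_
      rintro _ ⟨x, rfl⟩
      show ψ (φ (i x)) = i x
      rw [show φ (i x) = auxJ G Ghatp ip x from DFunLike.congr_fun hφcomp x]
      exact DFunLike.congr_fun hψcomp x
    exact fun x => congrFun heq x
  have h2 : ∀ y : ∀ p, Ghatp p, φ (ψ y) = y := by
    have heq : ⇑φ ∘ ⇑ψ = id := by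
      refine Continuous.ext_on (auxJ_dense G Ghatp ip hpdense) (hφc.comp hψc) continuous_id ?_
      rintro _ ⟨x, rfl⟩
      show φ (ψ (auxJ G Ghatp ip x)) = auxJ G Ghatp ip x
      rw [show ψ (auxJ G Ghatp ip x) = i x from DFunLike.congr_fun hψcomp x]
      exact DFunLike.congr_fun hφcomp x
    exact fun y => congrFun heq y
  let e : Ghat ≃* ∀ p, Ghatp p :=
    { toFun := φ
      invFun := ψ
      left_inv := h1
      right_inv := h2
      map_mul' := map_mul φ }
  exact ⟨e, hφc, hψc⟩
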